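/- Let r, c₁ be real numbers. The affine function t ↦ −r + c₁·t on [0,1] belongs to 𝒜 if and only if r = c₁/2 − v_f + v₀ and c₁ = 6·(v₀ + v_f − 2·(s_f − s₀)). In particular, if c₁ ≠ 0 and this function belongs to 𝒜, then s_f − s₀ ≠ (v₀ + v_f)/2. -/

import Mathlib

open MeasureTheory

/-- The measure on ℝ representing integration over the interval [0,1]. -/
noncomputable def mu01 : Measure ℝ := volume.restrict (Set.Icc 0 1)

/-- The affine set 𝒜 of controls in L²([0,1],ℝ) steering the double integrator
from (s₀, v₀) to (s_f, v_f). -/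
def setA (s0 sf v0 vf : ℝ) : Set (Lp ℝ 2 mu01) :=
  {u | (∫ t, u t ∂mu01) = vf - v0 ∧ (∫ t, (1 - t) * u t ∂mu01) = sf - s0 - v0}

/-- The box ℬ of controls bounded in absolute value by `a` a.e. on [0,1]. -/
def setB (a : ℝ) : Set (Lp ℝ 2 mu01) :=
  {u | ∀ᵐ t ∂mu01, |u t| ≤ a}

/-- The affine function t ↦ -r + c₁·t belongs to 𝒜 iff r = c₁/2 - v_f + v₀ and
c₁ = 6·(v₀ + v_f - 2·(s_f - s₀)); in particular, if c₁ ≠ 0 and it belongs to 𝒜,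
then s_f - s₀ ≠ (v₀ + v_f)/2. -/
lemma int1 (r c1 : ℝ) : (∫ t in Set.Icc (0:ℝ) 1, (-r + c1 * t)) = -r + c1 / 2 := by
  rw [MeasureTheory.integral_Icc_eq_integral_Ioc,
    ← intervalIntegral.integral_of_le (by norm_num : (0:ℝ) ≤ 1)]
  rw [intervalIntegral.integral_add intervalIntegrable_const
    ((by fun_prop : Continuous fun t : ℝ => c1 * t).intervalIntegrable 0 1),
    intervalIntegral.integral_const, intervalIntegral.integral_const_mul, integral_id]
  norm_num; ring

lemma int2 (r c1 : ℝ) :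
    (∫ t in Set.Icc (0:ℝ) 1, (1 - t) * (-r + c1 * t)) = -r / 2 + c1 / 6 := by
  rw [MeasureTheory.integral_Icc_eq_integral_Ioc,
    ← intervalIntegral.integral_of_le (by norm_num : (0:ℝ) ≤ 1)]
  have h : ∀ t : ℝ, (1 - t) * (-r + c1 * t) = -r + (c1 + r) * t - c1 * t ^ 2 := by
    intro t; ring
  simp_rw [h]
  rw [intervalIntegral.integral_sub
      ((by fun_prop : Continuous fun t : ℝ => -r + (c1 + r) * t).intervalIntegrable 0 1)
      ((by fun_prop : Continuous fun t : ℝ => c1 * t ^ 2).intervalIntegrable 0 1),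
    intervalIntegral.integral_add intervalIntegrable_const
      ((by fun_prop : Continuous fun t : ℝ => (c1 + r) * t).intervalIntegrable 0 1),
    intervalIntegral.integral_const, intervalIntegral.integral_const_mul,
    intervalIntegral.integral_const_mul, integral_id, integral_pow]
  norm_num; ring

theorem stmt_13 (s0 sf v0 vf r c1 : ℝ)
    (u : Lp ℝ 2 mu01) (hu : ∀ᵐ t ∂mu01, u t = -r + c1 * t) :
    (u ∈ setA s0 sf v0 vf ↔
      (r = c1 / 2 - vf + v0 ∧ c1 = 6 * (v0 + vf - 2 * (sf - s0)))) ∧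
    (c1 ≠ 0 → u ∈ setA s0 sf v0 vf → sf - s0 ≠ (v0 + vf) / 2) := by
  have h1 : (∫ t, u t ∂mu01) = -r + c1 / 2 := by
    rw [integral_congr_ae hu]; exact int1 r c1
  have h2 : (∫ t, (1 - t) * u t ∂mu01) = -r / 2 + c1 / 6 := by
    rw [integral_congr_ae (hu.mono fun t ht => by rw [ht])]
    exact int2 r c1
  constructor
  · constructor
    · rintro ⟨ha, hb⟩
      rw [h1] at ha; rw [h2] at hb
      constructor <;> linarith
    · rintro ⟨ha, hb⟩
      exact ⟨by rw [h1]; linarith, by rw [h2]; linarith⟩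
  · rintro hc ⟨ha, hb⟩ heq
    rw [h1] at ha; rw [h2] at hb
    apply hc; linarith
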